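/- Let X be a normal space such that every one-point subset of X is Gδ. Then the socle of B₁(X) is an essential ideal of B₁(X) and is a free ideal (i.e., the intersection of the zero sets of its members is empty). -/

import Mathlib

open Filter Topology

def IsBaireOne {X : Type*} [TopologicalSpace X] (f : X → ℝ) : Prop :=
  ∃ F : ℕ → X → ℝ, (∀ n, Continuous (F n)) ∧
    ∀ x, Filter.Tendsto (fun n => F n x) Filter.atTop (nhds (f x))

def B1 (X : Type*) [TopologicalSpace X] : Subring (X → ℝ) where
  carrier := {f | IsBaireOne f}
  zero_mem' := ⟨fun _ _ => 0, fun _ => continuous_const, fun _ => tendsto_const_nhds⟩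
  one_mem' := ⟨fun _ _ => 1, fun _ => continuous_const, fun _ => tendsto_const_nhds⟩
  add_mem' := by
    rintro f g ⟨F, hF, hFf⟩ ⟨G, hG, hGg⟩
    exact ⟨fun n => F n + G n, fun n => (hF n).add (hG n), fun x => (hFf x).add (hGg x)⟩
  mul_mem' := by
    rintro f g ⟨F, hF, hFf⟩ ⟨G, hG, hGg⟩
    exact ⟨fun n => F n * G n, fun n => (hF n).mul (hG n), fun x => (hFf x).mul (hGg x)⟩
  neg_mem' := by
    rintro f ⟨F, hF, hFf⟩
    exact ⟨fun n => -F n, fun n => (hF n).neg, fun x => (hFf x).neg⟩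

def zset {X : Type*} [TopologicalSpace X] (f : ↥(B1 X)) : Set X := {x | (f : X → ℝ) x = 0}

noncomputable def chi {X : Type*} (p : X) : X → ℝ := Set.indicator {p} (fun _ => 1)

def IsFsigma {X : Type*} [TopologicalSpace X] (s : Set X) : Prop :=
  ∃ c : ℕ → Set X, (∀ n, IsClosed (c n)) ∧ s = ⋃ n, c n

lemma chi_apply_self {X : Type*} (p : X) : chi p p = 1 := by simp [chi]

lemma chi_apply_ne {X : Type*} {p x : X} (h : x ≠ p) : chi p x = 0 := by simp [chi, h]

lemma chi_mem_B1 {X : Type*} [TopologicalSpace X] [T1Space X] [NormalSpace X]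
    (p : X) (hG : IsGδ ({p} : Set X)) : chi p ∈ B1 X := by
  obtain ⟨U, hUo, hU⟩ := hG.eq_iInter_nat
  have hpU : ∀ n, p ∈ U n := by
    intro n
    have : p ∈ ⋂ n, U n := hU ▸ rfl
    exact Set.mem_iInter.mp this n
  -- Urysohn for each n
  have key : ∀ n : ℕ, ∃ f : C(X, ℝ), f p = 1 ∧ ∀ x ∉ U n, f x = 0 := by
    intro n
    obtain ⟨f, hf0, hf1, _⟩ := exists_continuous_zero_one_of_isClosed
      (isClosed_compl_iff.mpr (hUo n)) (isClosed_singleton (x := p))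
      (Set.disjoint_left.mpr (by rintro a ha rfl; exact ha (hpU n)))
    exact ⟨f, hf1 rfl, fun x hx => hf0 hx⟩
  choose f hf1 hf0 using key
  refine ⟨fun n x => ∏ k ∈ Finset.range (n + 1), f k x, ?_, ?_⟩
  · intro n
    exact continuous_finset_prod _ fun k _ => (f k).continuous
  · intro x
    rcases eq_or_ne x p with rfl | hx
    · have : ∀ n : ℕ, ∏ k ∈ Finset.range (n + 1), f k x = 1 := by
        intro n; exact Finset.prod_eq_one fun k _ => hf1 k
      simp only [this, chi_apply_self]
      exact tendsto_const_nhds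
    · obtain ⟨m, hm⟩ : ∃ m, x ∉ U m := by
        by_contra h
        push_neg at h
        have : x ∈ ⋂ n, U n := Set.mem_iInter.mpr h
        rw [← hU] at this
        exact hx this
      rw [chi_apply_ne hx]
      apply tendsto_const_nhds.congr'
      filter_upwards [eventually_ge_atTop m] with n hn
      exact (Finset.prod_eq_zero (Finset.mem_range.mpr (by omega)) (hf0 m x hm)).symm

theorem stmt_5 {X : Type*} [TopologicalSpace X] [T1Space X] [NormalSpace X]
    (hG : ∀ p : X, IsGδ ({p} : Set X)) :
    (∀ J : Ideal ↥(B1 X), J ≠ ⊥ → (sSup {J : Ideal ↥(B1 X) | IsAtom J}) ⊓ J ≠ ⊥) ∧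
      (⋂ f ∈ (sSup {J : Ideal ↥(B1 X) | IsAtom J}), zset f) = ∅ := by
  set chiB : X → ↥(B1 X) := fun p => ⟨chi p, chi_mem_B1 p (hG p)⟩ with hchiB
  -- multiplication law: g * chiB p = (g p) • chiB p as functions
  have hmul : ∀ (p : X) (g : ↥(B1 X)), (g : X → ℝ) * chi p = fun x => (g : X → ℝ) p * chi p x := by
    intro p g
    funext x
    rcases eq_or_ne x p with rfl | hx
    · rfl
    · simp [chi_apply_ne hx]
  have hspan : ∀ p : X, IsAtom (Ideal.span {chiB p}) := by
    intro p
    constructor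
    · intro hbot
      have : chiB p ∈ (⊥ : Ideal ↥(B1 X)) := hbot ▸ Ideal.subset_span rfl
      rw [Ideal.mem_bot] at this
      have := congrFun (congrArg Subtype.val this) p
      simp only [chiB] at this
      rw [chi_apply_self] at this
      norm_num at this
    · intro J hJ
      by_contra hne
      obtain ⟨x, hxJ, hx0⟩ := Submodule.ne_bot_iff J |>.mp hne
      have hxspan : x ∈ Ideal.span {chiB p} := le_of_lt hJ hxJ
      obtain ⟨g, hg⟩ := Ideal.mem_span_singleton'.mp hxspan
      -- x = g * chiB p, so (x : fn) = g p • chi p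
      have hxfn : (x : X → ℝ) = fun y => (g : X → ℝ) p * chi p y := by
        rw [← hg]
        exact hmul p g
      have hgp : (g : X → ℝ) p ≠ 0 := by
        intro h
        apply hx0
        apply Subtype.ext
        rw [hxfn, h]
        funext y; simp
      -- chiB p = (const (1/g p)) * x ∈ J
      have hc : (fun _ : X => ((g : X → ℝ) p)⁻¹) ∈ B1 X :=
        ⟨fun _ _ => ((g : X → ℝ) p)⁻¹, fun _ => continuous_const, fun _ => tendsto_const_nhds⟩
      have : chiB p = (⟨_, hc⟩ : ↥(B1 X)) * x := by
        apply Subtype.ext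
        show chi p = (fun _ => ((g : X → ℝ) p)⁻¹) * (x : X → ℝ)
        rw [hxfn]
        funext y
        simp only [Pi.mul_apply]
        field_simp
      have hchiJ : chiB p ∈ J := this ▸ Ideal.mul_mem_left J _ hxJ
      have : Ideal.span {chiB p} ≤ J := (Ideal.span_singleton_le_iff_mem J).mpr hchiJ
      exact absurd (lt_of_lt_of_le hJ this).false (by simp)
  have hsoc : ∀ p : X, chiB p ∈ sSup {J : Ideal ↥(B1 X) | IsAtom J} := by
    intro p
    exact le_sSup (show Ideal.span {chiB p} ∈ {J : Ideal ↥(B1 X) | IsAtom J} from hspan p)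
      (Ideal.subset_span rfl)
  constructor
  · intro J hJ
    obtain ⟨x, hxJ, hx0⟩ := Submodule.ne_bot_iff J |>.mp hJ
    obtain ⟨p, hp⟩ : ∃ p, (x : X → ℝ) p ≠ 0 := by
      by_contra h
      push_neg at h
      exact hx0 (Subtype.ext (funext h))
    rw [Submodule.ne_bot_iff]
    refine ⟨x * chiB p, ⟨?_, Ideal.mul_mem_right _ _ hxJ⟩, ?_⟩
    · -- x * chiB p ∈ socle: it's in span {chiB p}
      have : x * chiB p ∈ Ideal.span {chiB p} := Ideal.mul_mem_left _ _ (Ideal.subset_span rfl)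
      exact le_sSup (show Ideal.span {chiB p} ∈ {J : Ideal ↥(B1 X) | IsAtom J} from hspan p) this
    · intro h
      have := congrFun (congrArg Subtype.val h) p
      simp only [Subring.coe_mul, Pi.mul_apply] at this
      rw [show ((chiB p : ↥(B1 X)) : X → ℝ) p = chi p p from rfl, chi_apply_self] at this
      simp at this
      exact hp this
  · ext p
    simp only [Set.mem_iInter, Set.mem_empty_iff_false, iff_false]
    intro h
    have := h (chiB p) (hsoc p)
    rw [zset] at this
    simp only [Set.mem_setOf_eq] at this
    rw [show ((chiB p : ↥(B1 X)) : X → ℝ) p = chi p p from rfl, chi_apply_self] at this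
    norm_num at this
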